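/- There are no integers x, y, r with gcd(x, y, r) = 1 such that (x+r)^2 + (x+2r)^2 + (x+3r)^2 + (x+4r)^2 + (x+5r)^2 + (x+6r)^2 = y^2. -/

import Mathlib

lemma even_of_zmod4 (x : ℤ) (h : (x : ZMod 4) = 0 ∨ (x : ZMod 4) = 2) : 2 ∣ x := by
  rcases h with h | h
  · have h4 : (4 : ℤ) ∣ x := (ZMod.intCast_zmod_eq_zero_iff_dvd x 4).mp h
    omega
  · have h2 : ((x - 2 : ℤ) : ZMod 4) = 0 := by push_cast; rw [h]; ring
    have h4 : (4 : ℤ) ∣ (x - 2) := (ZMod.intCast_zmod_eq_zero_iff_dvd _ 4).mp h2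
    omega

lemma key : ∀ a b c : ZMod 4,
    (a + b) ^ 2 + (a + 2 * b) ^ 2 + (a + 3 * b) ^ 2 + (a + 4 * b) ^ 2 +
      (a + 5 * b) ^ 2 + (a + 6 * b) ^ 2 = c ^ 2 →
    (a = 0 ∨ a = 2) ∧ (b = 0 ∨ b = 2) ∧ (c = 0 ∨ c = 2) := by decide

theorem stmt_3 :
    ¬ ∃ x y r : ℤ, Int.gcd x (Int.gcd y r) = 1 ∧
      (x + r) ^ 2 + (x + 2 * r) ^ 2 + (x + 3 * r) ^ 2 + (x + 4 * r) ^ 2 +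
        (x + 5 * r) ^ 2 + (x + 6 * r) ^ 2 = y ^ 2 := by
  rintro ⟨x, y, r, hg, he⟩
  have h4 : ((x : ZMod 4) + r) ^ 2 + ((x : ZMod 4) + 2 * r) ^ 2 +
      ((x : ZMod 4) + 3 * r) ^ 2 + ((x : ZMod 4) + 4 * r) ^ 2 +
      ((x : ZMod 4) + 5 * r) ^ 2 + ((x : ZMod 4) + 6 * r) ^ 2 = (y : ZMod 4) ^ 2 := by
    have := congrArg (Int.cast : ℤ → ZMod 4) he
    push_cast at this
    exact this
  obtain ⟨hx, hr, hy⟩ := key _ _ _ h4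
  have dx : (2 : ℤ) ∣ x := even_of_zmod4 x hx
  have dr : (2 : ℤ) ∣ r := even_of_zmod4 r hr
  have dy : (2 : ℤ) ∣ y := even_of_zmod4 y hy
  have : (2 : ℤ) ∣ (Int.gcd x (Int.gcd y r) : ℤ) :=
    Int.dvd_coe_gcd dx (Int.dvd_coe_gcd dy dr)
  rw [hg] at this
  norm_num at this
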